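/- Let F : C ⥤ C be an endofunctor of a category C with an initial algebra a : F A ⟶ A and a final coalgebra z : Z ⟶ F Z, and suppose there exists a morphism h : Z ⟶ A with h = a ∘ F h ∘ z. Then the coalgebra (A, a⁻¹) is a final coalgebra for F and the algebra (Z, z⁻¹) is an initial algebra for F (a and z are invertible by Lambek's lemma and its dual); in particular the initial algebra and the final coalgebra coincide up to isomorphism. -/
import Mathlib


open CategoryTheory

universe v u

/-- `(A, a)` is an initial algebra for the endofunctor `G`: for every algebra
`(Y, b)` there is a unique `k : A ⟶ Y` with `k ∘ a = b ∘ G k`. -/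
def IsInitialAlgebra {C : Type u} [Category.{v} C] (G : C ⥤ C)
    (A : C) (a : G.obj A ⟶ A) : Prop :=
  ∀ (Y : C) (b : G.obj Y ⟶ Y), ∃! k : A ⟶ Y, a ≫ k = G.map k ≫ b

/-- `(Z, z)` is a final coalgebra for the endofunctor `G`: for every coalgebra
`(Y, d)` there is a unique `k : Y ⟶ Z` with `z ∘ k = G k ∘ d`. -/
def IsFinalCoalgebra {C : Type u} [Category.{v} C] (G : C ⥤ C)
    (Z : C) (z : Z ⟶ G.obj Z) : Prop :=
  ∀ (Y : C) (d : Y ⟶ G.obj Y), ∃! k : Y ⟶ Z, k ≫ z = d ≫ G.map k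

/-- **Algebraic compactness.** Let `a : G A ⟶ A` be an initial algebra and
`z : Z ⟶ G Z` a final coalgebra for an endofunctor `G`, and suppose there is
a morphism `h : Z ⟶ A` with `h = a ∘ G h ∘ z`. Then the coalgebra
`(A, a⁻¹)` is a final coalgebra and the algebra `(Z, z⁻¹)` is an initial
algebra (where `a` and `z` are invertible by Lambek's lemma and its dual);
in particular the initial algebra and the final coalgebra coincide up to
isomorphism. -/
theorem algebraic_compactness {C : Type u} [Category.{v} C]
    (G : C ⥤ C) (A : C) (a : G.obj A ⟶ A) (hA : IsInitialAlgebra G A a)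
    (Z : C) (z : Z ⟶ G.obj Z) (hZ : IsFinalCoalgebra G Z z)
    (hex : ∃ h : Z ⟶ A, h = z ≫ G.map h ≫ a) :
    (∃ a' : A ⟶ G.obj A,
        a ≫ a' = 𝟙 (G.obj A) ∧ a' ≫ a = 𝟙 A ∧ IsFinalCoalgebra G A a') ∧
    (∃ z' : G.obj Z ⟶ Z,
        z ≫ z' = 𝟙 Z ∧ z' ≫ z = 𝟙 (G.obj Z) ∧ IsInitialAlgebra G Z z') ∧
    Nonempty (A ≅ Z) := by
  -- Lambek's lemma: `a` is invertible
  obtain ⟨i, hi, -⟩ := hA (G.obj A) (G.map a)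
  have hia : i ≫ a = 𝟙 A := by
    obtain ⟨u, -, hu⟩ := hA A a
    have h1 := hu (i ≫ a) (by dsimp only; rw [reassoc_of% hi, G.map_comp, Category.assoc])
    have h2 := hu (𝟙 A) (by dsimp only; simp)
    rw [h1, h2]
  have hai : a ≫ i = 𝟙 (G.obj A) := by
    rw [hi, ← G.map_comp, hia, G.map_id]
  -- dual Lambek: `z` is invertible
  obtain ⟨j, hj, -⟩ := hZ (G.obj Z) (G.map z)
  have hzj : z ≫ j = 𝟙 Z := by
    obtain ⟨u, -, hu⟩ := hZ Z z
    have h1 := hu (z ≫ j) (by dsimp only; rw [Category.assoc, hj, G.map_comp])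
    have h2 := hu (𝟙 Z) (by dsimp only; simp)
    rw [h1, h2]
  have hjz : j ≫ z = 𝟙 (G.obj Z) := by
    rw [hj, ← G.map_comp, hzj, G.map_id]
  obtain ⟨h, hh⟩ := hex
  obtain ⟨g, hg, -⟩ := hA Z j
  -- key morphism equations
  have hjh : j ≫ h = G.map h ≫ a := by
    conv_lhs => rw [hh]
    rw [← Category.assoc, hjz, Category.id_comp]
  have hgz : g ≫ z = i ≫ G.map g := by
    have hg' : g = i ≫ G.map g ≫ j := by
      conv_lhs => rw [← Category.id_comp g, ← hia, Category.assoc, hg]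
    conv_lhs => rw [hg']
    simp [hjz]
  have hhi : h ≫ i = z ≫ G.map h := by
    conv_lhs => rw [hh]
    simp [hai]
  have hgh : g ≫ h = 𝟙 A := by
    obtain ⟨u, -, hu⟩ := hA A a
    have h1 := hu (g ≫ h)
      (by dsimp only; rw [reassoc_of% hg, hjh, G.map_comp, Category.assoc])
    have h2 := hu (𝟙 A) (by dsimp only; simp)
    rw [h1, h2]
  have hhg : h ≫ g = 𝟙 Z := by
    obtain ⟨u, -, hu⟩ := hZ Z z
    have h1 := hu (h ≫ g)
      (by dsimp only; rw [Category.assoc, hgz, reassoc_of% hhi, G.map_comp])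
    have h2 := hu (𝟙 Z) (by dsimp only; simp)
    rw [h1, h2]
  refine ⟨⟨i, hai, hia, ?_⟩, ⟨j, hzj, hjz, ?_⟩, ⟨⟨g, h, hgh, hhg⟩⟩⟩
  · -- (A, i) is a final coalgebra
    intro Y d
    obtain ⟨m, hm, hmu⟩ := hZ Y d
    refine ⟨m ≫ h, ?_, ?_⟩
    · show (m ≫ h) ≫ i = d ≫ G.map (m ≫ h)
      rw [Category.assoc, hhi, reassoc_of% hm, G.map_comp]
    · intro k hk
      have : k ≫ g = m := hmu (k ≫ g)
        (by dsimp only; rw [Category.assoc, hgz, reassoc_of% hk, G.map_comp])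
      rw [← this, Category.assoc, hgh, Category.comp_id]
  · -- (Z, j) is an initial algebra
    intro Y b
    obtain ⟨m, hm, hmu⟩ := hA Y b
    refine ⟨h ≫ m, ?_, ?_⟩
    · show j ≫ h ≫ m = G.map (h ≫ m) ≫ b
      rw [reassoc_of% hjh, hm, G.map_comp, Category.assoc]
    · intro k hk
      have : g ≫ k = m := hmu (g ≫ k)
        (by dsimp only; rw [reassoc_of% hg, hk, G.map_comp, Category.assoc])
      rw [← this, ← Category.assoc, hhg, Category.id_comp]
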